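/- arXiv:2301.08818 — 6 statements merged into one kernel-verified Lean document; each statement's English description precedes it below -/
import Mathlib

section
/- Let A be an n×n complex matrix of index k and let m ≥ 1 be an integer. Then the m-weak core inverse satisfies A^{#_m} = (A^w)^m A^{m-1} P_{A^m}, where A^w = (A⊕)^2 A is the weak group inverse of A; in particular (A^w)^m = (A⊕)^{m+1} A. -/
open Matrix

/-- `X` is the Moore–Penrose inverse of `A` (four Penrose equations). -/
def MoorePenroseOf {n : ℕ} (A X : Matrix (Fin n) (Fin n) ℂ) : Prop :=
  A * X * A = A ∧ X * A * X = X ∧ (A * X)ᴴ = A * X ∧ (X * A)ᴴ = X * A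

/-- Column space of a square complex matrix. -/
noncomputable def colSpace {n : ℕ} (A : Matrix (Fin n) (Fin n) ℂ) : Submodule ℂ (Fin n → ℂ) :=
  LinearMap.range A.mulVecLin

/-- Null space of a square complex matrix. -/
noncomputable def nullSpace {n : ℕ} (A : Matrix (Fin n) (Fin n) ℂ) : Submodule ℂ (Fin n → ℂ) :=
  LinearMap.ker A.mulVecLin

/-- `k` is the index of `A`: the smallest nonnegative integer with
`rank(A^k) = rank(A^(k+1))`. -/
def HasIndex {n : ℕ} (A : Matrix (Fin n) (Fin n) ℂ) (k : ℕ) : Prop :=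
  (A ^ k).rank = (A ^ (k + 1)).rank ∧ ∀ j < k, (A ^ j).rank ≠ (A ^ (j + 1)).rank

/-- `X` is the core-EP inverse of `A` (where `k = Ind(A)`): `XAX = X` and
`R(X) = R(Xᴴ) = R(A^k)`. -/
def IsCoreEP {n : ℕ} (A X : Matrix (Fin n) (Fin n) ℂ) (k : ℕ) : Prop :=
  X * A * X = X ∧ colSpace X = colSpace (A ^ k) ∧ colSpace Xᴴ = colSpace (A ^ k)

lemma wg_pow_aux {n : ℕ} (A X : Matrix (Fin n) (Fin n) ℂ) (h : X * A * X = X) :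
    ∀ m : ℕ, (X ^ 2 * A) ^ (m + 1) = X ^ (m + 2) * A := by
  intro m
  induction m with
  | zero => simp
  | succ m ih =>
    have h1 : X ^ (m + 2) * A * (X ^ 2 * A) = X ^ (m + 1) * (X * A * X) * (X * A) := by
      simp only [pow_succ, pow_zero, one_mul, mul_assoc]
    calc (X ^ 2 * A) ^ (m + 1 + 1) = (X ^ 2 * A) ^ (m + 1) * (X ^ 2 * A) := by rw [pow_succ]
      _ = X ^ (m + 2) * A * (X ^ 2 * A) := by rw [ih]
      _ = X ^ (m + 1) * (X * A * X) * (X * A) := h1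
      _ = X ^ (m + 1) * X * (X * A) := by rw [h]
      _ = X ^ (m + 1 + 2) * A := by simp only [pow_succ, mul_assoc]

/-- `A^{#_m} = (A^w)^m A^{m-1} P_{A^m}` where `A^w = (A⊕)^2 A`;
in particular `(A^w)^m = (A⊕)^{m+1} A`. -/
theorem stmt_0 {n k m : ℕ} (hm : 1 ≤ m)
    (A CEP AmDag : Matrix (Fin n) (Fin n) ℂ)
    (hInd : HasIndex A k)
    (hCEP : IsCoreEP A CEP k)
    (hMP : MoorePenroseOf (A ^ m) AmDag) :
    CEP ^ (m + 1) * A ^ m * (A ^ m * AmDag) =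
      (CEP ^ 2 * A) ^ m * A ^ (m - 1) * (A ^ m * AmDag) ∧
    (CEP ^ 2 * A) ^ m = CEP ^ (m + 1) * A := by
  obtain ⟨m', rfl⟩ : ∃ m', m = m' + 1 := ⟨m - 1, (Nat.succ_pred_eq_of_pos hm).symm⟩
  have key := wg_pow_aux A CEP hCEP.1 m'
  refine ⟨?_, key⟩
  rw [key, Nat.add_sub_cancel, mul_assoc (CEP ^ (m' + 2)) A (A ^ m'), ← pow_succ']
end

section
/- Let A be an n×n complex matrix of index k and let m ≥ 1 be an integer. If Y is an n×n complex matrix satisfying YAY = Y and R(Y) = R(A^k), then A^{#_m} = Y A A^{#_m}. -/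
open Matrix

lemma colSpace_mul_le {n : ℕ} (B C : Matrix (Fin n) (Fin n) ℂ) :
    colSpace (B * C) ≤ colSpace B := by
  rintro x ⟨v, rfl⟩
  exact ⟨C.mulVec v, by simp [Matrix.mulVecLin_apply, Matrix.mulVec_mulVec]⟩

lemma eq_mul_of_col_le {n : ℕ} (Y A M : Matrix (Fin n) (Fin n) ℂ)
    (hY1 : Y * A * Y = Y) (h : colSpace M ≤ colSpace Y) :
    Y * A * M = M := by
  have key : ∀ v, (Y * A * M).mulVec v = M.mulVec v := by
    intro v
    obtain ⟨w, hw⟩ := h ⟨v, rfl⟩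
    simp only [Matrix.mulVecLin_apply] at hw
    calc (Y * A * M).mulVec v = (Y * A).mulVec (M.mulVec v) := by
          rw [Matrix.mulVec_mulVec]
      _ = (Y * A).mulVec (Y.mulVec w) := by rw [hw]
      _ = (Y * A * Y).mulVec w := by rw [Matrix.mulVec_mulVec]
      _ = Y.mulVec w := by rw [hY1]
      _ = M.mulVec v := hw
  ext i j
  have := congrFun (key (Pi.single j 1)) i
  simpa [Matrix.mulVec_single] using this

/-- if `YAY = Y` and `R(Y) = R(A^k)` then `A^{#_m} = Y A A^{#_m}`. -/
theorem stmt_3 {n k m : ℕ} (hm : 1 ≤ m)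
    (A CEP AmDag Y : Matrix (Fin n) (Fin n) ℂ)
    (hInd : HasIndex A k)
    (hCEP : IsCoreEP A CEP k)
    (hMP : MoorePenroseOf (A ^ m) AmDag)
    (hY1 : Y * A * Y = Y)
    (hY2 : colSpace Y = colSpace (A ^ k)) :
    CEP ^ (m + 1) * A ^ m * (A ^ m * AmDag) =
      Y * A * (CEP ^ (m + 1) * A ^ m * (A ^ m * AmDag)) := by
  have hcol : colSpace (CEP ^ (m + 1) * A ^ m * (A ^ m * AmDag)) ≤ colSpace Y := by
    rw [hY2, ← hCEP.2.1]
    have : CEP ^ (m + 1) * A ^ m * (A ^ m * AmDag)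
        = CEP * (CEP ^ m * A ^ m * (A ^ m * AmDag)) := by
      rw [pow_succ']; simp [mul_assoc]
    rw [this]
    exact colSpace_mul_le _ _
  exact (eq_mul_of_col_le Y A _ hY1 hcol).symm
end

section
/- Let A be an n×n complex matrix of index k and let m ≥ 1 be an integer. Then A^{#_m} A A^{#_m} = A^{#_m}, i.e., the m-weak core inverse is an outer inverse of A. -/
open Matrix

/-- Column space of a product. -/
lemma colSpace_mul {n : ℕ} (A B : Matrix (Fin n) (Fin n) ℂ) :
    colSpace (A * B) = (colSpace B).map A.mulVecLin := by
  unfold colSpace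
  rw [Matrix.mulVecLin_mul, LinearMap.range_comp]

/-- Factorization from column-space inclusion. -/
lemma exists_factor {n : ℕ} (B X : Matrix (Fin n) (Fin n) ℂ)
    (h : colSpace X ≤ colSpace B) : ∃ Y, B * Y = X := by
  have hmem : ∀ j, X.mulVec (Pi.single j 1) ∈ colSpace B := fun j =>
    h ⟨Pi.single j 1, by simp [Matrix.mulVecLin_apply]⟩
  choose f hf using hmem
  refine ⟨Matrix.of fun i j => f j i, ?_⟩
  ext i j
  have h1 : B.mulVec (f j) = X.mulVec (Pi.single j 1) := by
    simpa [Matrix.mulVecLin_apply] using hf j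
  have h2 := congrFun h1 i
  simp only [Matrix.mulVec, dotProduct, Pi.single_apply, mul_ite, mul_one, mul_zero,
    Finset.sum_ite_eq', Finset.mem_univ, if_true] at h2
  simpa [Matrix.mul_apply] using h2

lemma colSpace_pow_stable {n k : ℕ} {A : Matrix (Fin n) (Fin n) ℂ}
    (hInd : HasIndex A k) : ∀ j, colSpace (A ^ (k + j)) = colSpace (A ^ k) := by
  have hstep : colSpace (A ^ (k + 1)) = colSpace (A ^ k) := by
    have hle : colSpace (A ^ (k + 1)) ≤ colSpace (A ^ k) := by
      rw [pow_succ, colSpace_mul]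
      exact LinearMap.map_le_range
    have hfr : Module.finrank ℂ (colSpace (A ^ (k + 1))) = Module.finrank ℂ (colSpace (A ^ k)) := by
      have := hInd.1
      simp only [Matrix.rank] at this
      exact this.symm
    exact Submodule.eq_of_le_of_finrank_eq hle hfr
  intro j
  induction j with
  | zero => rfl
  | succ j ih =>
    calc colSpace (A ^ (k + (j + 1)))
        = colSpace (A * A ^ (k + j)) := by
          rw [show A ^ (k + (j + 1)) = A * A ^ (k + j) from pow_succ' A (k + j)]
      _ = (colSpace (A ^ (k + j))).map A.mulVecLin := colSpace_mul _ _
      _ = (colSpace (A ^ k)).map A.mulVecLin := by rw [ih]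
      _ = colSpace (A * A ^ k) := (colSpace_mul _ _).symm
      _ = colSpace (A ^ (k + 1)) := by rw [← pow_succ']
      _ = colSpace (A ^ k) := hstep

lemma colSpace_pow_le {n k : ℕ} {A : Matrix (Fin n) (Fin n) ℂ}
    (hInd : HasIndex A k) (m : ℕ) : colSpace (A ^ k) ≤ colSpace (A ^ m) := by
  rcases le_total m k with h | h
  · have : A ^ k = A ^ m * A ^ (k - m) := by
      rw [← pow_add, Nat.add_sub_cancel' h]
    rw [this, colSpace_mul]
    exact LinearMap.map_le_range
  · have : colSpace (A ^ m) = colSpace (A ^ k) := by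
      have := colSpace_pow_stable hInd (m - k)
      rwa [Nat.add_sub_cancel' h] at this
    rw [this]

/-- `A^{#_m} A A^{#_m} = A^{#_m}` (outer inverse). -/
theorem stmt_4 {n k m : ℕ} (hm : 1 ≤ m)
    (A CEP AmDag : Matrix (Fin n) (Fin n) ℂ)
    (hInd : HasIndex A k)
    (hCEP : IsCoreEP A CEP k)
    (hMP : MoorePenroseOf (A ^ m) AmDag) :
    (CEP ^ (m + 1) * A ^ m * (A ^ m * AmDag)) * A *
      (CEP ^ (m + 1) * A ^ m * (A ^ m * AmDag)) =
      CEP ^ (m + 1) * A ^ m * (A ^ m * AmDag) := by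
  set X := CEP with hX
  have hXAX : X * A * X = X := hCEP.1
  have hXAX' : X * (A * X) = X := by rw [← mul_assoc]; exact hXAX
  -- Q * X = X where Q = Aᵐ * AmDag
  have hQX : A ^ m * AmDag * X = X := by
    obtain ⟨Y, hY⟩ := exists_factor (A ^ m) X
      (hCEP.2.1 ▸ colSpace_pow_le hInd m)
    calc A ^ m * AmDag * X = A ^ m * AmDag * (A ^ m * Y) := by rw [hY]
      _ = A ^ m * AmDag * A ^ m * Y := by simp only [mul_assoc]
      _ = A ^ m * Y := by rw [hMP.1]
      _ = X := hY
  -- colSpace (A * X) = colSpace X, hence (A*X)*X = X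
  have hcolAX : colSpace X ≤ colSpace (A * X) := by
    have : colSpace (A * X) = colSpace X := by
      calc colSpace (A * X) = (colSpace X).map A.mulVecLin := colSpace_mul _ _
        _ = (colSpace (A ^ k)).map A.mulVecLin := by rw [hCEP.2.1]
        _ = colSpace (A * A ^ k) := (colSpace_mul _ _).symm
        _ = colSpace (A ^ (k + 1)) := by rw [← pow_succ']
        _ = colSpace (A ^ k) := by
            have := colSpace_pow_stable hInd 1
            simpa using this
        _ = colSpace X := hCEP.2.1.symm
    rw [this]
  have hPidem : (A * X) * (A * X) = A * X := by
    calc (A * X) * (A * X) = A * (X * (A * X)) := by simp only [mul_assoc]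
      _ = A * X := by rw [hXAX']
  have hPX : (A * X) * X = X := by
    obtain ⟨Z, hZ⟩ := exists_factor (A * X) X hcolAX
    calc (A * X) * X = (A * X) * ((A * X) * Z) := by rw [hZ]
      _ = ((A * X) * (A * X)) * Z := by simp only [mul_assoc]
      _ = (A * X) * Z := by rw [hPidem]
      _ = X := hZ
  -- A * X^(j+2) = X^(j+1)
  have hA : ∀ j : ℕ, A * X ^ (j + 2) = X ^ (j + 1) := by
    intro j
    induction j with
    | zero =>
      simp only [zero_add, pow_two, pow_one, ← mul_assoc]
      exact hPX
    | succ j ih =>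
      calc A * X ^ (j + 1 + 2)
          = A * (X ^ (j + 2) * X) := by
            rw [show X ^ (j + 1 + 2) = X ^ (j + 2) * X from pow_succ X (j + 2)]
        _ = (A * X ^ (j + 2)) * X := by simp only [mul_assoc]
        _ = X ^ (j + 1) * X := by rw [ih]
        _ = X ^ (j + 1 + 1) := (pow_succ X (j + 1)).symm
  -- A^(j+1) * X^(j+1) = A * X
  have hAmXm : ∀ j : ℕ, A ^ (j + 1) * X ^ (j + 1) = A * X := by
    intro j
    induction j with
    | zero => simp
    | succ j ih =>
      calc A ^ (j + 1 + 1) * X ^ (j + 1 + 1)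
          = (A ^ (j + 1) * A) * X ^ (j + 1 + 1) := by
            rw [show A ^ (j + 1 + 1) = A ^ (j + 1) * A from pow_succ A (j + 1)]
        _ = A ^ (j + 1) * (A * X ^ (j + 1 + 1)) := by simp only [mul_assoc]
        _ = A ^ (j + 1) * X ^ (j + 1) := by
            rw [show A * X ^ (j + 1 + 1) = X ^ (j + 1) from hA j]
        _ = A * X := ih
  obtain ⟨j, rfl⟩ : ∃ j, m = j + 1 := ⟨m - 1, (Nat.succ_pred_eq_of_pos hm).symm⟩
  have hAXm : A * X ^ (j + 1 + 1) = X ^ (j + 1) := hA j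
  have hQXm : A ^ (j + 1) * AmDag * X ^ (j + 1) = X ^ (j + 1) := by
    calc A ^ (j + 1) * AmDag * X ^ (j + 1)
        = A ^ (j + 1) * AmDag * (X * X ^ j) := by
          rw [show X ^ (j + 1) = X * X ^ j from pow_succ' X j]
      _ = (A ^ (j + 1) * AmDag * X) * X ^ j := by simp only [mul_assoc]
      _ = X * X ^ j := by rw [hQX]
      _ = X ^ (j + 1) := (pow_succ' X j).symm
  have hXP : X ^ (j + 1 + 1) * (A * X) = X ^ (j + 1 + 1) := by
    calc X ^ (j + 1 + 1) * (A * X)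
        = (X ^ (j + 1) * X) * (A * X) := by
          rw [show X ^ (j + 1 + 1) = X ^ (j + 1) * X from pow_succ X (j + 1)]
      _ = X ^ (j + 1) * (X * (A * X)) := by simp only [mul_assoc]
      _ = X ^ (j + 1) * X := by rw [hXAX']
      _ = X ^ (j + 1 + 1) := (pow_succ X (j + 1)).symm
  calc (X ^ (j + 1 + 1) * A ^ (j + 1) * (A ^ (j + 1) * AmDag)) * A *
        (X ^ (j + 1 + 1) * A ^ (j + 1) * (A ^ (j + 1) * AmDag))
      = X ^ (j + 1 + 1) * A ^ (j + 1) * (A ^ (j + 1) * AmDag) * (A * X ^ (j + 1 + 1)) *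
          (A ^ (j + 1) * (A ^ (j + 1) * AmDag)) := by simp only [mul_assoc]
    _ = X ^ (j + 1 + 1) * A ^ (j + 1) * (A ^ (j + 1) * AmDag) * X ^ (j + 1) *
          (A ^ (j + 1) * (A ^ (j + 1) * AmDag)) := by rw [hAXm]
    _ = X ^ (j + 1 + 1) * A ^ (j + 1) * (A ^ (j + 1) * AmDag * X ^ (j + 1)) *
          (A ^ (j + 1) * (A ^ (j + 1) * AmDag)) := by simp only [mul_assoc]
    _ = X ^ (j + 1 + 1) * A ^ (j + 1) * X ^ (j + 1) *
          (A ^ (j + 1) * (A ^ (j + 1) * AmDag)) := by rw [hQXm]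
    _ = X ^ (j + 1 + 1) * (A ^ (j + 1) * X ^ (j + 1)) *
          (A ^ (j + 1) * (A ^ (j + 1) * AmDag)) := by simp only [mul_assoc]
    _ = X ^ (j + 1 + 1) * (A * X) * (A ^ (j + 1) * (A ^ (j + 1) * AmDag)) := by rw [hAmXm j]
    _ = X ^ (j + 1 + 1) * (A ^ (j + 1) * (A ^ (j + 1) * AmDag)) := by rw [hXP]
    _ = X ^ (j + 1 + 1) * A ^ (j + 1) * (A ^ (j + 1) * AmDag) := by simp only [mul_assoc]
end

section
/- Let A be an n×n complex matrix of index k, let m ≥ 1 be an integer, and let l be an integer with l ≥ k. Then A^{#_m} = (A^d)^{m+1} P_{A^l} A^m P_{A^m}, where A^d is the Drazin inverse of A. -/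
open Matrix

/-- If the column space of `X` is contained in that of `Y`, then `X = Y * U` for some `U`. -/
lemma colSpace_factor {n : ℕ} {X Y : Matrix (Fin n) (Fin n) ℂ}
    (h : colSpace X ≤ colSpace Y) : ∃ U, Y * U = X := by
  have hmem : ∀ j, ∃ u, Y *ᵥ u = X *ᵥ Pi.single j 1 := by
    intro j
    have : X *ᵥ Pi.single j 1 ∈ colSpace Y := h ⟨Pi.single j 1, by simp [mulVecLin_apply]⟩
    obtain ⟨u, hu⟩ := this
    exact ⟨u, by simpa [mulVecLin_apply] using hu⟩
  choose u hu using hmem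
  refine ⟨Matrix.of fun r j => u j r, ?_⟩
  ext i j
  have := congrFun (hu j) i
  simp only [mulVec, dotProduct, Pi.single_apply, mul_ite, mul_one, mul_zero,
    Finset.sum_ite_eq', Finset.mem_univ, if_true] at this
  simpa [Matrix.mul_apply, mulVec, dotProduct] using this

/-- for `l ≥ k`, `A^{#_m} = (A^d)^{m+1} P_{A^l} A^m P_{A^m}`. -/
theorem stmt_7 {n k m l : ℕ} (hm : 1 ≤ m) (hl : k ≤ l)
    (A CEP AmDag AlDag D : Matrix (Fin n) (Fin n) ℂ)
    (hInd : HasIndex A k)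
    (hCEP : IsCoreEP A CEP k)
    (hMPm : MoorePenroseOf (A ^ m) AmDag)
    (hMPl : MoorePenroseOf (A ^ l) AlDag)
    (hD1 : D * A * D = D)
    (hD2 : A * D = D * A)
    (hD3 : D * A ^ (k + 1) = A ^ k) :
    CEP ^ (m + 1) * A ^ m * (A ^ m * AmDag) =
      D ^ (m + 1) * (A ^ l * AlDag) * A ^ m * (A ^ m * AmDag) := by
  obtain ⟨hfix, hcol, hcolH⟩ := hCEP
  obtain ⟨U, hU⟩ := colSpace_factor (le_of_eq hcol)
  obtain ⟨W, hW⟩ := colSpace_factor (le_of_eq hcol.symm)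
  obtain ⟨V, hV⟩ := colSpace_factor (le_of_eq hcolH)
  set P := A ^ l * AlDag with hPdef
  have commAD : Commute A D := hD2
  -- D^j * A^(k+j) = A^k
  have hDj : ∀ j, D ^ j * A ^ (k + j) = A ^ k := by
    intro j
    induction j with
    | zero => simp
    | succ j ih =>
      have h1 : k + (j + 1) = (k + 1) + j := by omega
      calc D ^ (j + 1) * A ^ (k + (j + 1))
          = D ^ j * ((D * A ^ (k + 1)) * A ^ j) := by
            rw [h1, pow_add A, pow_succ D]; simp only [mul_assoc]
        _ = D ^ j * A ^ (k + j) := by rw [hD3, pow_add A]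
        _ = A ^ k := ih
  have hAD1 : ∀ j, A ^ (k + j) * D ^ j = A ^ k := by
    intro j
    rw [(commAD.pow_pow (k + j) j).eq]
    exact hDj j
  have hAkl : A ^ l * D ^ (l - k) = A ^ k := by
    have := hAD1 (l - k)
    rwa [Nat.add_sub_cancel' hl] at this
  have hPAk : P * A ^ k = A ^ k := by
    rw [hPdef, ← hAkl]
    calc A ^ l * AlDag * (A ^ l * D ^ (l - k))
        = (A ^ l * AlDag * A ^ l) * D ^ (l - k) := by simp only [mul_assoc]
      _ = A ^ l * D ^ (l - k) := by rw [hMPl.1]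
  -- D * (A * CEP) = CEP
  have hDAC : D * (A * CEP) = CEP := by
    calc D * (A * CEP) = (D * A ^ (k + 1)) * U := by
          rw [← hU, pow_succ' A]; simp only [mul_assoc]
      _ = CEP := by rw [hD3, hU]
  -- CEP * A^(k+1) = A^k
  have hCA : CEP * A ^ (k + 1) = A ^ k := by
    calc CEP * A ^ (k + 1) = (CEP * A * CEP) * W := by
          rw [pow_succ' A, ← hW]; simp only [mul_assoc]
      _ = A ^ k := by rw [hfix, hW]
  have hAk1D : A ^ (k + 1) * D = A ^ k := by simpa using hAD1 1
  -- A * CEP * CEP = CEP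
  have hCexp : CEP = A ^ (k + 1) * (D * U) := by rw [← mul_assoc, hAk1D, hU]
  have hACC : A * CEP * CEP = CEP := by
    nth_rewrite 2 [hCexp]
    calc A * CEP * (A ^ (k + 1) * (D * U))
        = A * (CEP * A ^ (k + 1)) * (D * U) := by simp only [mul_assoc]
      _ = A ^ (k + 1) * (D * U) := by rw [hCA, pow_succ' A]
      _ = CEP := hCexp.symm
  have hC2 : CEP * CEP = D * CEP := by
    calc CEP * CEP = (D * (A * CEP)) * CEP := by rw [hDAC]
      _ = D * (A * CEP * CEP) := by simp only [mul_assoc]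
      _ = D * CEP := by rw [hACC]
  have hCpow : ∀ j, CEP ^ (j + 1) = D ^ j * CEP := by
    intro j
    induction j with
    | zero => simp
    | succ j ih =>
      calc CEP ^ (j + 2) = CEP ^ (j + 1) * CEP := by rw [pow_succ]
        _ = D ^ j * (CEP * CEP) := by rw [ih]; simp only [mul_assoc]
        _ = D ^ j * (D * CEP) := by rw [hC2]
        _ = D ^ (j + 1) * CEP := by rw [pow_succ D]; simp only [mul_assoc]
  -- A * CEP * A^l = A^l
  have hAl1D : A ^ (l + 1) * D = A ^ l := by
    have h1 : l + 1 = (l - k) + (k + 1) := by omega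
    have h2 : (l - k) + k = l := by omega
    calc A ^ (l + 1) * D = A ^ (l - k) * (A ^ (k + 1) * D) := by
          rw [h1, pow_add A]; simp only [mul_assoc]
      _ = A ^ ((l - k) + k) := by rw [hAk1D, pow_add A]
      _ = A ^ l := by rw [h2]
  have hCAl : CEP * A ^ (l + 1) = A ^ l := by
    have h1 : l + 1 = (k + 1) + (l - k) := by omega
    have h2 : k + (l - k) = l := by omega
    calc CEP * A ^ (l + 1) = (CEP * A ^ (k + 1)) * A ^ (l - k) := by
          rw [h1, pow_add A]; simp only [mul_assoc]
      _ = A ^ (k + (l - k)) := by rw [hCA, pow_add A]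
      _ = A ^ l := by rw [h2]
  have hMAl : A * CEP * A ^ l = A ^ l := by
    calc A * CEP * A ^ l = A * (CEP * A ^ (l + 1)) * D := by
          rw [← hAl1D]; simp only [mul_assoc]
      _ = A ^ (l + 1) * D := by rw [hCAl, pow_succ' A]
      _ = A ^ l := hAl1D
  have hMP : A * CEP * P = P := by
    rw [hPdef, ← mul_assoc, hMAl]
  have hPH : Pᴴ = P := hMPl.2.2.1
  have hCP : CEP * P = CEP := by
    have hCexpH : CEP = Vᴴ * (A ^ k)ᴴ := by
      rw [← conjTranspose_mul, hV, conjTranspose_conjTranspose]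
    calc CEP * P = Vᴴ * ((A ^ k)ᴴ * P) := by rw [hCexpH]; simp only [mul_assoc]
      _ = Vᴴ * (Pᴴ * A ^ k)ᴴ := by rw [conjTranspose_mul, conjTranspose_conjTranspose]
      _ = Vᴴ * (A ^ k)ᴴ := by rw [hPH, hPAk]
      _ = CEP := hCexpH.symm
  have hMeqP : A * CEP = P := by
    have h1 : A * CEP * P = A * CEP := by rw [mul_assoc, hCP]
    rw [← h1, hMP]
  have key : CEP ^ (m + 1) = D ^ (m + 1) * P := by
    calc CEP ^ (m + 1) = D ^ m * CEP := hCpow m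
      _ = D ^ m * (D * (A * CEP)) := by rw [hDAC]
      _ = (D ^ m * D) * (A * CEP) := by simp only [mul_assoc]
      _ = D ^ (m + 1) * P := by rw [← pow_succ, hMeqP]
  rw [key]
end

section
/- Let A be an n×n complex matrix of index k and let m ≥ 1 be an integer. Then the column space of A^{#_m} equals the column space of A^k, i.e., R(A^{#_m}) = R(A^k). -/
open Matrix

lemma colSpace_mul_eq_map {n : ℕ} (B C : Matrix (Fin n) (Fin n) ℂ) :
    colSpace (B * C) = (colSpace C).map B.mulVecLin := by
  rw [colSpace, colSpace, Matrix.mulVecLin_mul, LinearMap.range_comp]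

/-- Column spaces of powers stabilize from the index on. -/
lemma colSpace_pow_stab {n k : ℕ} {A : Matrix (Fin n) (Fin n) ℂ}
    (hInd : HasIndex A k) : ∀ j, k ≤ j → colSpace (A ^ j) = colSpace (A ^ k) := by
  have hstep : colSpace (A ^ (k + 1)) = colSpace (A ^ k) := by
    have hle : colSpace (A ^ (k + 1)) ≤ colSpace (A ^ k) := by
      have : A ^ (k + 1) = A ^ k * A := by rw [pow_succ]
      rw [this]; exact colSpace_mul_le _ _
    exact Submodule.eq_of_le_of_finrank_eq hle hInd.1.symm
  intro j hj
  induction j with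
  | zero => simp at hj; subst hj; rfl
  | succ j ih =>
    rcases Nat.lt_or_ge k (j + 1) with h | h
    · have hkj : k ≤ j := Nat.lt_succ_iff.mp h
      have : A ^ (j + 1) = A * A ^ j := by rw [pow_succ']
      rw [this, colSpace_mul_eq_map, ih hkj, ← colSpace_mul_eq_map, ← pow_succ', hstep]
    · have : k = j + 1 := le_antisymm hj h
      rw [this]

lemma matrix_ext_of_mulVec {n : ℕ} {M N : Matrix (Fin n) (Fin n) ℂ}
    (h : ∀ v, M.mulVec v = N.mulVec v) : M = N := by
  ext i j
  have := congrFun (h (Pi.single j 1)) i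
  simpa [Matrix.mulVec_single_one] using this

/-- If `XAX = X` and the columns of `A^t` lie in `R(X)`, then `X * A^(t+1) = A^t`. -/
lemma X_mul_pow_succ {n : ℕ} {X A : Matrix (Fin n) (Fin n) ℂ} {t : ℕ}
    (hX : X * A * X = X) (hcol : colSpace (A ^ t) ≤ colSpace X) :
    X * A ^ (t + 1) = A ^ t := by
  apply matrix_ext_of_mulVec
  intro v
  have hmem : (A ^ t).mulVec v ∈ colSpace X := hcol ⟨v, rfl⟩
  obtain ⟨u, hu⟩ := hmem
  have hu' : X.mulVec u = (A ^ t).mulVec v := hu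
  calc (X * A ^ (t + 1)).mulVec v
      = (X * A).mulVec ((A ^ t).mulVec v) := by
        rw [Matrix.mulVec_mulVec, pow_succ', Matrix.mul_assoc]
    _ = (X * A).mulVec (X.mulVec u) := by rw [hu']
    _ = (X * A * X).mulVec u := by rw [Matrix.mulVec_mulVec]
    _ = X.mulVec u := by rw [hX]
    _ = (A ^ t).mulVec v := hu'

/-- Iterated absorption: `X^i * A^(i+t) = A^t` for `t ≥ k`. -/
lemma X_pow_absorb {n k : ℕ} {X A : Matrix (Fin n) (Fin n) ℂ}
    (hInd : HasIndex A k) (hX : X * A * X = X) (hR : colSpace X = colSpace (A ^ k)) :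
    ∀ i t, k ≤ t → X ^ i * A ^ (i + t) = A ^ t := by
  intro i
  induction i with
  | zero => intro t _; simp
  | succ i ih =>
    intro t ht
    have hcol : colSpace (A ^ (i + t)) ≤ colSpace X := by
      rw [hR, colSpace_pow_stab hInd (i + t) (le_trans ht (Nat.le_add_left t i))]
    have h1 : X * A ^ (i + t + 1) = A ^ (i + t) := X_mul_pow_succ hX hcol
    have : X ^ (i + 1) * A ^ (i + 1 + t) = X ^ i * (X * A ^ (i + t + 1)) := by
      rw [pow_succ, Matrix.mul_assoc]
      ring_nf
    rw [this, h1, ih t ht]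

/-- `R(A^{#_m}) = R(A^k)`. -/
theorem stmt_10 {n k m : ℕ} (hm : 1 ≤ m)
    (A CEP AmDag : Matrix (Fin n) (Fin n) ℂ)
    (hInd : HasIndex A k)
    (hCEP : IsCoreEP A CEP k)
    (hMP : MoorePenroseOf (A ^ m) AmDag) :
    colSpace (CEP ^ (m + 1) * A ^ m * (A ^ m * AmDag)) = colSpace (A ^ k) := by
  obtain ⟨hX, hR, -⟩ := hCEP
  set M : Matrix (Fin n) (Fin n) ℂ := CEP ^ (m + 1) * A ^ m * (A ^ m * AmDag) with hM
  -- Upper bound: R(M) ⊆ R(CEP) = R(A^k)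
  have hle : colSpace M ≤ colSpace (A ^ k) := by
    have h1 : M = CEP * (CEP ^ m * A ^ m * (A ^ m * AmDag)) := by
      rw [hM, pow_succ']
      simp [Matrix.mul_assoc]
    rw [h1, ← hR]
    exact colSpace_mul_le _ _
  -- Key computation: M * A^(m+k+1) = A^(m+k)
  have hMA : M * A ^ (m + k + 1) = A ^ (m + k) := by
    have hPen : A ^ m * AmDag * A ^ m = A ^ m := hMP.1
    have h2 : M * A ^ (m + k + 1) = CEP ^ (m + 1) * A ^ ((m + 1) + (m + k)) := by
      rw [hM]
      have : A ^ ((m + 1) + (m + k)) = A ^ m * A ^ m * A ^ (k + 1) := by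
        rw [← pow_add, ← pow_add]; ring_nf
      rw [this]
      calc CEP ^ (m + 1) * A ^ m * (A ^ m * AmDag) * A ^ (m + k + 1)
          = CEP ^ (m + 1) * A ^ m * (A ^ m * AmDag * A ^ m) * A ^ (k + 1) := by
            have : A ^ (m + k + 1) = A ^ m * A ^ (k + 1) := by
              rw [← pow_add]; ring_nf
            rw [this]; simp [Matrix.mul_assoc]
        _ = CEP ^ (m + 1) * A ^ m * A ^ m * A ^ (k + 1) := by rw [hPen]
        _ = CEP ^ (m + 1) * (A ^ m * A ^ m * A ^ (k + 1)) := by simp [Matrix.mul_assoc]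
    rw [h2, X_pow_absorb hInd hX hR (m + 1) (m + k) (Nat.le_add_left k m)]
  -- Lower bound
  have hge : colSpace (A ^ k) ≤ colSpace M := by
    have h3 : colSpace (A ^ k) = colSpace (A ^ (m + k)) :=
      (colSpace_pow_stab hInd (m + k) (Nat.le_add_left k m)).symm
    rw [h3, ← hMA]
    exact colSpace_mul_le _ _
  exact le_antisymm hle hge
end

section
/- Let A be an n×n complex matrix of index k and let m ≥ 1 be an integer. Then the null space of A^{#_m} equals the null space of (A^k)* A^m P_{A^m}, i.e., N(A^{#_m}) = N((A^k)* A^m P_{A^m}). -/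
open Matrix

lemma star_dot_self_eq_zero {n : ℕ} {v : Fin n → ℂ} (h : star v ⬝ᵥ v = 0) : v = 0 := by
  have hre : ∑ i, ((v i).re * (v i).re + (v i).im * (v i).im) = 0 := by
    have := congrArg Complex.re h
    simpa [dotProduct, Complex.re_sum] using this
  have hz : ∀ i ∈ Finset.univ, ((v i).re * (v i).re + (v i).im * (v i).im) = 0 :=
    (Finset.sum_eq_zero_iff_of_nonneg
      (fun i _ => add_nonneg (mul_self_nonneg _) (mul_self_nonneg _))).mp hre
  funext i
  have hi := hz i (Finset.mem_univ i)
  have h1 : (v i).re = 0 := by nlinarith [mul_self_nonneg (v i).re, mul_self_nonneg (v i).im]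
  have h2 : (v i).im = 0 := by nlinarith [mul_self_nonneg (v i).re, mul_self_nonneg (v i).im]
  exact Complex.ext h1 h2

lemma mem_nullSpace_iff' {n : ℕ} (M : Matrix (Fin n) (Fin n) ℂ) (x : Fin n → ℂ) :
    x ∈ LinearMap.ker M.mulVecLin ↔ M *ᵥ x = 0 := by
  simp [LinearMap.mem_ker, mulVecLin_apply]

lemma nullSpace_conjTranspose_eq {n : ℕ} (M N : Matrix (Fin n) (Fin n) ℂ)
    (h : LinearMap.range M.mulVecLin = LinearMap.range N.mulVecLin) :
    LinearMap.ker Mᴴ.mulVecLin = LinearMap.ker Nᴴ.mulVecLin := by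
  have key : ∀ (P : Matrix (Fin n) (Fin n) ℂ) (x : Fin n → ℂ),
      Pᴴ *ᵥ x = 0 ↔ ∀ v ∈ LinearMap.range P.mulVecLin, star x ⬝ᵥ v = 0 := by
    intro P x
    have hdot : ∀ y, star x ⬝ᵥ (P *ᵥ y) = star (Pᴴ *ᵥ x) ⬝ᵥ y := by
      intro y
      rw [dotProduct_mulVec, star_mulVec, conjTranspose_conjTranspose]
    constructor
    · rintro h0 v ⟨y, rfl⟩
      rw [mulVecLin_apply, hdot, h0]
      simp
    · intro hall
      have := hall (P *ᵥ (Pᴴ *ᵥ x)) ⟨Pᴴ *ᵥ x, rfl⟩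
      rw [hdot] at this
      exact star_dot_self_eq_zero this
  ext x
  rw [mem_nullSpace_iff', mem_nullSpace_iff', key, key, h]

lemma ker_CEP_pow {n k : ℕ} (A CEP : Matrix (Fin n) (Fin n) ℂ)
    (hR : LinearMap.range CEP.mulVecLin = LinearMap.range (A ^ k).mulVecLin)
    (hK : LinearMap.ker CEP.mulVecLin = LinearMap.ker ((A ^ k)ᴴ).mulVecLin) :
    ∀ j : ℕ, LinearMap.ker (CEP ^ (j + 1)).mulVecLin = LinearMap.ker CEP.mulVecLin := by
  have inj : ∀ v : Fin n → ℂ, v ∈ LinearMap.range (A ^ k).mulVecLin →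
      (A ^ k)ᴴ *ᵥ v = 0 → v = 0 := by
    rintro v ⟨y, rfl⟩ h0
    rw [mulVecLin_apply] at h0 ⊢
    apply star_dot_self_eq_zero
    rw [star_mulVec, ← dotProduct_mulVec, h0]
    simp
  intro j
  induction j with
  | zero => simp
  | succ j ih =>
    ext x
    rw [mem_nullSpace_iff', mem_nullSpace_iff']
    constructor
    · intro h0
      have h1 : CEP ^ (j + 1) *ᵥ (CEP *ᵥ x) = 0 := by
        rw [mulVec_mulVec, ← pow_succ]
        exact h0
      have h2 : CEP *ᵥ x ∈ LinearMap.ker CEP.mulVecLin := by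
        rw [← ih]; exact (mem_nullSpace_iff' _ _).mpr h1
      rw [hK, mem_nullSpace_iff'] at h2
      exact inj (CEP *ᵥ x) (hR ▸ ⟨x, rfl⟩) h2
    · intro h0
      rw [pow_succ, ← mulVec_mulVec, h0, mulVec_zero]

/-- `N(A^{#_m}) = N((A^k)ᴴ A^m P_{A^m})`. -/
theorem stmt_11 {n k m : ℕ} (hm : 1 ≤ m)
    (A CEP AmDag : Matrix (Fin n) (Fin n) ℂ)
    (hInd : HasIndex A k)
    (hCEP : IsCoreEP A CEP k)
    (hMP : MoorePenroseOf (A ^ m) AmDag) :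
    nullSpace (CEP ^ (m + 1) * A ^ m * (A ^ m * AmDag)) =
      nullSpace ((A ^ k)ᴴ * A ^ m * (A ^ m * AmDag)) := by
  obtain ⟨-, hRcol, hRHcol⟩ := hCEP
  have hK : LinearMap.ker CEP.mulVecLin = LinearMap.ker ((A ^ k)ᴴ).mulVecLin := by
    have := nullSpace_conjTranspose_eq CEPᴴ (A ^ k) hRHcol
    rwa [conjTranspose_conjTranspose] at this
  have hker : LinearMap.ker (CEP ^ (m + 1)).mulVecLin
      = LinearMap.ker ((A ^ k)ᴴ).mulVecLin := by
    rw [ker_CEP_pow A CEP hRcol hK m]; exact hK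
  show LinearMap.ker _ = LinearMap.ker _
  simp only [mul_assoc, mulVecLin_mul, LinearMap.ker_comp, hker]
end
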